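/- Assume the charge constraint ∑_{k} Q k = 0, and let z ∈ ℂ satisfy z ≠ z_c and z ≠ Z k for all k. Then for ζ̃(z) = (z − z_c) · Complex.exp(Γ + ∑_{k} Q k · Complex.log((z − Z k)/(z − z_c))) one has the equivalence: ‖ζ̃(z)‖ = 1 if and only if ∑_{k} Q k · Real.log ‖z − Z k‖ + Γ = − Real.log ‖z − z_c‖. -/

import Mathlib

theorem stmt_10 (N : ℕ) (hN : 0 < N) (Q : Fin N → ℝ) (hQ : ∑ k, Q k = 0)
    (Z : Fin N → ℂ) (z_c : ℂ) (Γ : ℝ) (z : ℂ) (hz : z ≠ z_c) (hZ : ∀ k, z ≠ Z k) :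
    ‖(z - z_c) * Complex.exp ((Γ : ℂ) + ∑ k, (Q k : ℂ) * Complex.log ((z - Z k) / (z - z_c)))‖ = 1
      ↔ (∑ k, Q k * Real.log ‖z - Z k‖) + Γ = - Real.log ‖z - z_c‖ := by
  have hzc : z - z_c ≠ 0 := sub_ne_zero.mpr hz
  have hzcn : ‖z - z_c‖ ≠ 0 := norm_ne_zero_iff.mpr hzc
  have hre : ((Γ : ℂ) + ∑ k, (Q k : ℂ) * Complex.log ((z - Z k) / (z - z_c))).re
      = Γ + ∑ k, Q k * Real.log ‖z - Z k‖ := by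
    rw [Complex.add_re, Complex.re_sum, Complex.ofReal_re]
    congr 1
    have : ∀ k, ((Q k : ℂ) * Complex.log ((z - Z k) / (z - z_c))).re
        = Q k * Real.log ‖z - Z k‖ - Q k * Real.log ‖z - z_c‖ := by
      intro k
      have hzk : z - Z k ≠ 0 := sub_ne_zero.mpr (hZ k)
      rw [Complex.mul_re, Complex.ofReal_re, Complex.ofReal_im, zero_mul, sub_zero,
        Complex.log_re, norm_div, Real.log_div (norm_ne_zero_iff.mpr hzk) (norm_ne_zero_iff.mpr hzc)]
      simp [mul_sub]
    rw [Finset.sum_congr rfl (fun k _ => this k), Finset.sum_sub_distrib,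
      ← Finset.sum_mul, hQ, zero_mul, sub_zero]
  rw [norm_mul, Complex.norm_exp, hre]
  have hkey : ‖z - z_c‖ * Real.exp (Γ + ∑ k, Q k * Real.log ‖z - Z k‖)
      = Real.exp (Real.log ‖z - z_c‖ + (Γ + ∑ k, Q k * Real.log ‖z - Z k‖)) := by
    conv_lhs => rw [← Real.exp_log (norm_pos_iff.mpr hzc), ← Real.exp_add]
  rw [hkey, Real.exp_eq_one_iff]
  constructor <;> intro h <;> linarith
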